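/- Let X be a class of modules closed under isomorphism. If there exists an infinite cardinal κ such that X is closed under direct limits of well-ordered direct systems indexed by ordinals of cardinality at least κ, then X is closed under all well-ordered direct limits. -/

import Mathlib

/-- If a class of modules closed under isomorphism is closed under direct limits of
well-ordered systems indexed by ordinals of cardinality at least `κ` (for some infinite
cardinal `κ`), then it is closed under all (nonempty) well-ordered direct limits. -/
theorem stmt1
    {R : Type u} [Ring R]
    (𝒳 : ∀ (M : Type u) [AddCommGroup M] [Module R M], Prop)
    (hiso : ∀ (M N : Type u) [AddCommGroup M] [Module R M] [AddCommGroup N] [Module R N],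
      (M ≃ₗ[R] N) → 𝒳 M → 𝒳 N)
    (κ : Cardinal.{u}) (hκ : ℵ₀ ≤ κ)
    (H : ∀ (o : Ordinal.{u}), κ ≤ o.card →
      ∀ (G : o.ToType → Type u) (_ : ∀ i, AddCommGroup (G i)) (_ : ∀ i, Module R (G i))
        (f : ∀ i j : o.ToType, i ≤ j → G i →ₗ[R] G j),
        DirectedSystem G (fun i j h => f i j h) →
        (∀ i, 𝒳 (G i)) → 𝒳 (Module.DirectLimit G f)) :
    ∀ (o : Ordinal.{u}), o ≠ 0 →
      ∀ (G : o.ToType → Type u) (_ : ∀ i, AddCommGroup (G i)) (_ : ∀ i, Module R (G i))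
        (f : ∀ i j : o.ToType, i ≤ j → G i →ₗ[R] G j),
        DirectedSystem G (fun i j h => f i j h) →
        (∀ i, 𝒳 (G i)) → 𝒳 (Module.DirectLimit G f) := by
  intro o ho G _ _ f hsys hG
  classical
  haveI : DirectedSystem G (fun i j h => f i j h) := hsys
  set c := (κ ⊔ 1).ord with hc
  have hccard : c.card = κ ⊔ 1 := by rw [hc, Cardinal.card_ord]
  have hc0 : c ≠ 0 := by
    intro h
    have : c.card = 0 := by rw [h, Ordinal.card_zero]
    rw [hccard] at this
    have h1 : (1 : Cardinal) ≤ 0 := this ▸ le_sup_right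
    exact (lt_irrefl (0 : Cardinal)) (lt_of_lt_of_le zero_lt_one h1)
  set μ := c * o with hμ
  have hμ0 : μ ≠ 0 := mul_ne_zero hc0 ho
  haveI : Nonempty o.ToType := Ordinal.nonempty_toType_iff.2 ho
  haveI : Nonempty μ.ToType := Ordinal.nonempty_toType_iff.2 hμ0
  have hcard : κ ≤ μ.card := by
    rw [hμ, Ordinal.card_mul, hccard]
    calc κ ≤ (κ ⊔ 1) * 1 := by rw [mul_one]; exact le_sup_left
    _ ≤ (κ ⊔ 1) * o.card := by
        apply mul_le_mul_right
        rw [Cardinal.one_le_iff_ne_zero]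
        simpa using ho
  set eμ := Ordinal.ToType.mk (o := μ) with heμ
  set eo := Ordinal.ToType.mk (o := o) with heo
  have hdiv : ∀ i : μ.ToType, (↑(eμ.symm i) : Ordinal) / c < o :=
    fun i => (Ordinal.div_lt hc0).2 (eμ.symm i).2
  set g : μ.ToType → o.ToType := fun i => eo ⟨(↑(eμ.symm i) : Ordinal) / c, hdiv i⟩ with hg
  have hgmono : Monotone g := by
    intro i j hij
    apply eo.le_iff_le.2
    apply Subtype.mk_le_mk.2
    exact Ordinal.div_le_left (Subtype.coe_le_coe.2 (eμ.symm.le_iff_le.2 hij)) c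
  have hmul : ∀ q : o.ToType, c * (↑(eo.symm q) : Ordinal) < μ := fun q =>
    (mul_lt_mul_iff_right₀ (pos_iff_ne_zero.2 hc0)).2 (eo.symm q).2
  set s : o.ToType → μ.ToType := fun q => eμ ⟨c * ↑(eo.symm q), hmul q⟩ with hs
  have hgs : ∀ q, g (s q) = q := by
    intro q
    show eo ⟨(↑(eμ.symm (s q)) : Ordinal) / c, hdiv (s q)⟩ = q
    have h1 : eμ.symm (s q) = ⟨c * ↑(eo.symm q), hmul q⟩ := eμ.symm_apply_apply _
    have h2 : (⟨(↑(eμ.symm (s q)) : Ordinal) / c, hdiv (s q)⟩ : Set.Iio o) = eo.symm q := by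
      apply Subtype.ext
      show (↑(eμ.symm (s q)) : Ordinal) / c = ↑(eo.symm q)
      rw [h1]
      exact Ordinal.mul_div_cancel _ hc0
    rw [h2, OrderIso.apply_symm_apply]
  have hsmono : Monotone s := by
    intro q q' h
    apply eμ.le_iff_le.2
    apply Subtype.mk_le_mk.2
    exact mul_le_mul_right (Subtype.coe_le_coe.2 (eo.symm.le_iff_le.2 h)) c
  have hsg : ∀ i, s (g i) ≤ i := by
    intro i
    rw [← eμ.symm.le_iff_le, ← Subtype.coe_le_coe]
    simp only [hs, hg, OrderIso.symm_apply_apply]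
    exact Ordinal.mul_div_le _ _
  set G' : μ.ToType → Type u := fun i => G (g i) with hG'
  set f' : ∀ i j : μ.ToType, i ≤ j → G' i →ₗ[R] G' j :=
    fun i j h => f (g i) (g j) (hgmono h) with hf'
  haveI hsys' : DirectedSystem G' (fun i j h => f' i j h) := by
    constructor
    · intro i x
      exact Module.DirectedSystem.map_self f x
    · intro k j i hij hjk x
      exact Module.DirectedSystem.map_map f _ _ x
  have hX' : ∀ i, 𝒳 (G' i) := fun i => hG (g i)
  have h1 := H μ hcard G' (fun i => inferInstance) (fun i => inferInstance) f' hsys' hX'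
  set φ : Module.DirectLimit G' f' →ₗ[R] Module.DirectLimit G f :=
    Module.DirectLimit.lift R μ.ToType G' f'
      (fun i => Module.DirectLimit.of R o.ToType G f (g i))
      (fun i j hij x => Module.DirectLimit.of_f) with hφ
  have Hψ : ∀ (q q' : o.ToType) (h : q ≤ q') (x : G q),
      (Module.DirectLimit.of R μ.ToType G' f' (s q'))
        (f q' (g (s q')) (le_of_eq (hgs q').symm) (f q q' h x)) =
      (Module.DirectLimit.of R μ.ToType G' f' (s q))
        (f q (g (s q)) (le_of_eq (hgs q).symm) x) := by
    intro q q' h x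
    rw [Module.DirectedSystem.map_map f]
    rw [← Module.DirectLimit.of_f (R := R) (ι := μ.ToType) (G := G') (f := f')
      (hij := hsmono h) (x := f q (g (s q)) (le_of_eq (hgs q).symm) x)]
    congr 1
    rw [show f' (s q) (s q') (hsmono h) = f (g (s q)) (g (s q')) (hgmono (hsmono h)) from rfl,
      Module.DirectedSystem.map_map f]
  set ψ : Module.DirectLimit G f →ₗ[R] Module.DirectLimit G' f' :=
    Module.DirectLimit.lift R o.ToType G f
      (fun q => (Module.DirectLimit.of R μ.ToType G' f' (s q)).comp
        (f q (g (s q)) (le_of_eq (hgs q).symm)))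
      (fun q q' h x => Hψ q q' h x) with hψ
  have hφψ : ∀ z, φ (ψ z) = z := by
    intro z
    refine Module.DirectLimit.induction_on z fun q x => ?_
    rw [hψ, Module.DirectLimit.lift_of, LinearMap.comp_apply, hφ,
      Module.DirectLimit.lift_of]
    exact Module.DirectLimit.of_f
  have hψφ : ∀ z, ψ (φ z) = z := by
    intro z
    refine Module.DirectLimit.induction_on z fun i x => ?_
    rw [hφ, Module.DirectLimit.lift_of, hψ, Module.DirectLimit.lift_of,
      LinearMap.comp_apply]
    rw [← Module.DirectLimit.of_f (R := R) (ι := μ.ToType) (G := G') (f := f')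
      (hij := hsg i) (x := f (g i) (g (s (g i))) (le_of_eq (hgs (g i)).symm) x)]
    congr 1
    rw [show f' (s (g i)) i (hsg i) = f (g (s (g i))) (g i) (hgmono (hsg i)) from rfl,
      Module.DirectedSystem.map_map f, Module.DirectedSystem.map_self f]
  exact hiso _ _ (LinearEquiv.ofLinear φ ψ (LinearMap.ext hφψ) (LinearMap.ext hψφ)) h1
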